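/- Fix an integer k ≥ 1 and assume sin(jθ) ≠ 0 for all integers 1 ≤ j ≤ 2k. Then at every ball-wall collision the Galperin billiard state lies exactly on the ellipse in velocity–inverse-position coordinates: (m/M)·(x_0/X_{2k})² + (V_{2k}/V_0)² = 1, where θ = arctan(√(m/M)). -/

import Mathlib

/-- At every ball-wall collision the Galperin billiard state lies exactly on
the ellipse in velocity–inverse-position coordinates:
`(m/M)·(x_0/X_{2k})² + (V_{2k}/V_0)² = 1`. -/
theorem galperin_ball_wall_ellipse
    (M m : ℝ) (hM : 0 < M) (hm : 0 < m)
    (θ : ℝ) (hθ : θ = Real.arctan (Real.sqrt (m / M)))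
    (k : ℕ) (hk : 1 ≤ k)
    (hsin : ∀ j : ℕ, 1 ≤ j → j ≤ 2 * k → Real.sin ((j : ℝ) * θ) ≠ 0)
    (V v X x : ℕ → ℝ)
    (hV0 : 0 < V 0) (hv0 : v 0 = 0) (hX0x0 : X 0 < x 0) (hx0 : x 0 < 0)
    (hBBvel : ∀ l : ℕ,
      V (2 * l + 1) = ((M - m) * V (2 * l) + 2 * m * v (2 * l)) / (M + m) ∧
      v (2 * l + 1) = (2 * M * V (2 * l) + (m - M) * v (2 * l)) / (M + m))
    (hBWvel : ∀ l : ℕ, 1 ≤ l →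
      V (2 * l) = V (2 * l - 1) ∧ v (2 * l) = -v (2 * l - 1))
    (hBBpos : ∀ l : ℕ, 2 * l + 1 ≤ 2 * k →
      X (2 * l + 1)
        = X (2 * l) + (X (2 * l) - x (2 * l)) * V (2 * l) / (v (2 * l) - V (2 * l)) ∧
      x (2 * l + 1) = X (2 * l + 1))
    (hBWpos : ∀ l : ℕ, 1 ≤ l → 2 * l ≤ 2 * k →
      X (2 * l) = X (2 * l - 1) - (V (2 * l - 1) / v (2 * l - 1)) * x (2 * l - 1) ∧
      x (2 * l) = 0) :
    (m / M) * (x 0 / X (2 * k)) ^ 2 + (V (2 * k) / V 0) ^ 2 = 1 := by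
  set t := Real.sqrt (m / M) with hts
  have htpos : 0 < t := Real.sqrt_pos.2 (by positivity)
  have ht2 : t ^ 2 = m / M := Real.sq_sqrt (by positivity)
  have hMne : M ≠ 0 := ne_of_gt hM
  have hmeq : m = M * t ^ 2 := by rw [ht2]; field_simp
  have hMm : M + m ≠ 0 := by positivity
  have hMm2 : M + M * t ^ 2 ≠ 0 := by positivity
  have htne : t ≠ 0 := ne_of_gt htpos
  have hV0ne : V 0 ≠ 0 := ne_of_gt hV0
  have hcpos : 0 < Real.cos θ := by
    rw [hθ, Real.cos_arctan]; positivity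
  have hcne : Real.cos θ ≠ 0 := ne_of_gt hcpos
  have hstc : Real.sin θ = t * Real.cos θ := by
    rw [hθ, Real.sin_arctan, Real.cos_arctan]
    ring
  have hpy : Real.cos θ ^ 2 * (1 + t ^ 2) = 1 := by
    have h := Real.sin_sq_add_cos_sq θ
    rw [hstc] at h
    linear_combination h
  have hcos2 : Real.cos (2 * θ) = (M - m) / (M + m) := by
    rw [Real.cos_two_mul, hmeq]
    field_simp
    linear_combination 2 * hpy
  have hsin2 : Real.sin (2 * θ) = 2 * M * t / (M + m) := by
    rw [Real.sin_two_mul, hstc, hmeq]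
    field_simp
    linear_combination hpy
  have key : ∀ l : ℕ, 1 ≤ l → l ≤ k →
      V (2 * l) = V 0 * Real.cos (((2 * l : ℕ) : ℝ) * θ) ∧
      v (2 * l) = -(V 0 / t) * Real.sin (((2 * l : ℕ) : ℝ) * θ) ∧
      X (2 * l) = x 0 * t / Real.sin (((2 * l : ℕ) : ℝ) * θ) := by
    intro l hl1
    induction l, hl1 using Nat.le_induction with
    | base =>
      intro hlk
      obtain ⟨hV1, hv1⟩ := hBBvel 0
      obtain ⟨hV2, hv2⟩ := hBWvel 1 le_rfl
      obtain ⟨hX1, hx1⟩ := hBBpos 0 (by omega)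
      obtain ⟨hX2, hx2⟩ := hBWpos 1 le_rfl (by omega)
      norm_num at hV1 hv1 hV2 hv2 hX1 hx1 hX2 hx2 ⊢
      rw [hv0] at hV1 hv1
      have hX1' : X 1 = x 0 := by
        rw [hX1, hv0]; field_simp [hV0ne]; ring
      have hv1ne : v 1 ≠ 0 := by
        rw [hv1]
        exact ne_of_gt (div_pos (by nlinarith) (by positivity))
      refine ⟨?_, ?_, ?_⟩
      · rw [hV2, hV1, hcos2]; ring
      · rw [hv2, hv1, hsin2, hmeq]; field_simp [hMm2, htne]; ring
      · rw [hX2, hx1, hX1', hV1, hv1, hsin2, hmeq]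
        field_simp [hMm2, htne, hV0ne, hMne]
        ring
    | succ n hn ih =>
      intro hnk
      obtain ⟨hVa, hva, hXa⟩ := ih (by omega)
      have h22 : 2 * (n + 1) = 2 * n + 2 := by ring
      have h21 : 2 * n + 2 - 1 = 2 * n + 1 := by omega
      obtain ⟨hBB1, hBB2⟩ := hBBvel n
      obtain ⟨hBW1, hBW2⟩ := hBWvel (n + 1) (by omega)
      rw [h22, h21] at hBW1 hBW2
      obtain ⟨hP1, hP2⟩ := hBBpos n (by omega)
      obtain ⟨hQ1, hQ2⟩ := hBWpos (n + 1) (by omega) (by omega)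
      rw [h22, h21] at hQ1
      rw [h22] at hQ2
      have hx2n : x (2 * n) = 0 := (hBWpos n (by omega) (by omega)).2
      have hc2 : ((2 * n + 2 : ℕ) : ℝ) * θ = ((2 * n : ℕ) : ℝ) * θ + 2 * θ := by
        push_cast; ring
      have hc1 : ((2 * n + 1 : ℕ) : ℝ) * θ = ((2 * n : ℕ) : ℝ) * θ + θ := by
        push_cast; ring
      set A := ((2 * n : ℕ) : ℝ) * θ with hA
      have hs0 : Real.sin A ≠ 0 := hsin (2 * n) (by omega) (by omega)
      have hs1 : Real.sin (A + θ) ≠ 0 := by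
        rw [← hc1]; exact hsin (2 * n + 1) (by omega) (by omega)
      have hs2 : Real.sin (A + 2 * θ) ≠ 0 := by
        rw [← hc2]; exact hsin (2 * n + 2) (by omega) (by omega)
      have hV2n1 : V (2 * n + 1) = V 0 * Real.cos (A + 2 * θ) := by
        rw [hBB1, hVa, hva, Real.cos_add, hcos2, hsin2, hmeq]
        field_simp
        ring
      have hv2n1 : v (2 * n + 1) = (V 0 / t) * Real.sin (A + 2 * θ) := by
        rw [hBB2, hVa, hva, Real.sin_add, hcos2, hsin2, hmeq]
        field_simp
        ring
      have hv2n1ne : v (2 * n + 1) ≠ 0 := by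
        rw [hv2n1]
        exact mul_ne_zero (div_ne_zero hV0ne htne) hs2
      have hdenval : v (2 * n) - V (2 * n)
          = -(V 0 / t) * (Real.sin A + t * Real.cos A) := by
        rw [hva, hVa]
        field_simp
        ring
      have hS1 : Real.sin (A + θ) = (Real.sin A + t * Real.cos A) * Real.cos θ := by
        rw [Real.sin_add, hstc]; ring
      have hS1ne : Real.sin A + t * Real.cos A ≠ 0 := by
        intro h
        rw [hS1, h, zero_mul] at hs1
        exact hs1 rfl
      have hX2n1 : X (2 * n + 1) = x 0 * t / (Real.sin A + t * Real.cos A) := by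
        rw [hP1, hdenval, hXa, hVa, hx2n]
        field_simp
        ring
      have hrel : Real.sin (A + θ)
          = (Real.sin (A + 2 * θ) - t * Real.cos (A + 2 * θ)) * Real.cos θ := by
        have h : A + θ = (A + 2 * θ) - θ := by ring
        rw [h, Real.sin_sub, hstc]; ring
      have hrelne : Real.sin (A + 2 * θ) - t * Real.cos (A + 2 * θ) ≠ 0 := by
        intro h
        rw [hrel, h, zero_mul] at hs1
        exact hs1 rfl
      have hstc2 : Real.sin A + t * Real.cos A
          = Real.sin (A + 2 * θ) - t * Real.cos (A + 2 * θ) :=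
        mul_right_cancel₀ hcne (hS1.symm.trans hrel)
      refine ⟨?_, ?_, ?_⟩
      · rw [h22, hBW1, hV2n1, hc2]
      · rw [h22, hBW2, hv2n1, hc2]; ring
      · rw [h22, hQ1, hP2, hX2n1, hv2n1, hV2n1, hc2, hstc2]
        field_simp
  obtain ⟨hVk, -, hXk⟩ := key k hk le_rfl
  have hs2k : Real.sin (((2 * k : ℕ) : ℝ) * θ) ≠ 0 := hsin (2 * k) (by omega) le_rfl
  have hx0ne : x 0 ≠ 0 := ne_of_lt hx0
  rw [hVk, hXk]
  have h1 : x 0 / (x 0 * t / Real.sin (((2 * k : ℕ) : ℝ) * θ))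
      = Real.sin (((2 * k : ℕ) : ℝ) * θ) / t := by
    rw [div_div_eq_mul_div, mul_div_mul_left _ _ hx0ne]
  have h2 : V 0 * Real.cos (((2 * k : ℕ) : ℝ) * θ) / V 0
      = Real.cos (((2 * k : ℕ) : ℝ) * θ) := by
    rw [mul_comm, mul_div_assoc, div_self hV0ne, mul_one]
  have h3 : t ^ 2 * (Real.sin (((2 * k : ℕ) : ℝ) * θ) / t) ^ 2
      = Real.sin (((2 * k : ℕ) : ℝ) * θ) ^ 2 := by
    field_simp
  rw [h1, h2, ← ht2, h3]
  exact Real.sin_sq_add_cos_sq _
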